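/- Let m ∈ ℝ, m ≠ 0, and let f, 𝔣 : Γ₊ → ℝ be symmetric, differentiable, positively homogeneous of degree m, and elliptic on Γ₊ (all first partial derivatives of both f and 𝔣 are positive on Γ₊). If f is convex and 𝔣 is concave on Γ₊, then for every λ ∈ Γ₊: m · ( 𝔣(λ) · Σᵢ ∂f/∂λᵢ(λ) · λᵢ² − f(λ) · Σᵢ ∂𝔣/∂λᵢ(λ) · λᵢ² ) ≥ 0. -/

import Mathlib

open Finset

private lemma gradineq_convex {n : ℕ} {s : Set (Fin n → ℝ)} {f : (Fin n → ℝ) → ℝ}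
    (hc : ConvexOn ℝ s f) {x y : Fin n → ℝ} (hx : x ∈ s) (hy : y ∈ s)
    (hd : DifferentiableAt ℝ f x) : fderiv ℝ f x (y - x) ≤ f y - f x := by
  have hφ := hc.comp_affineMap (AffineMap.lineMap x y)
  have h0 : (0:ℝ) ∈ (AffineMap.lineMap x y : ℝ →ᵃ[ℝ] (Fin n → ℝ)) ⁻¹' s := by
    simp [AffineMap.lineMap_apply_zero, hx]
  have h1 : (1:ℝ) ∈ (AffineMap.lineMap x y : ℝ →ᵃ[ℝ] (Fin n → ℝ)) ⁻¹' s := by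
    simp [AffineMap.lineMap_apply_one, hy]
  have hL : HasDerivAt (fun t : ℝ => (AffineMap.lineMap x y : ℝ →ᵃ[ℝ] _) t) (y - x) 0 := by
    have : HasDerivAt (fun t : ℝ => t • (y - x) + x) ((1:ℝ) • (y - x)) 0 :=
      ((hasDerivAt_id (0:ℝ)).smul_const (y - x)).add_const x
    simpa [AffineMap.lineMap_apply_module'] using this
  have hφ' : HasDerivAt (f ∘ (AffineMap.lineMap x y : ℝ →ᵃ[ℝ] _)) (fderiv ℝ f x (y - x)) 0 := by
    have hd' : DifferentiableAt ℝ f ((AffineMap.lineMap x y : ℝ →ᵃ[ℝ] _) (0:ℝ)) := by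
      simpa [AffineMap.lineMap_apply_zero] using hd
    have := hd'.hasFDerivAt.comp_hasDerivAt 0 hL
    simpa [AffineMap.lineMap_apply_zero] using this
  have := hφ.le_slope_of_hasDerivAt h0 h1 one_pos hφ'
  simpa [slope_def_field, AffineMap.lineMap_apply_zero, AffineMap.lineMap_apply_one] using this

private lemma gradineq_concave {n : ℕ} {s : Set (Fin n → ℝ)} {f : (Fin n → ℝ) → ℝ}
    (hc : ConcaveOn ℝ s f) {x y : Fin n → ℝ} (hx : x ∈ s) (hy : y ∈ s)
    (hd : DifferentiableAt ℝ f x) : f y - f x ≤ fderiv ℝ f x (y - x) := by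
  have := gradineq_convex hc.neg hx hy hd.neg
  simp only [Pi.neg_def] at this
  rw [fderiv_fun_neg] at this
  simp only [ContinuousLinearMap.neg_apply] at this
  linarith

/-- Euler's identity for positively homogeneous functions. -/
private lemma euler_id {n : ℕ} {m : ℝ} {f : (Fin n → ℝ) → ℝ} {x : Fin n → ℝ}
    (hd : DifferentiableAt ℝ f x)
    (hhom : ∀ t : ℝ, 0 < t → f (t • x) = t ^ m * f x) :
    ∑ i, fderiv ℝ f x (Pi.single i 1) * x i = m * f x := by
  have hL : HasDerivAt (fun t : ℝ => t • x) ((1:ℝ) • x) 1 := (hasDerivAt_id (1:ℝ)).smul_const x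
  have h1 : HasDerivAt (fun t : ℝ => f (t • x)) (fderiv ℝ f x x) 1 := by
    have hd' : DifferentiableAt ℝ f ((1:ℝ) • x) := by simpa using hd
    have := hd'.hasFDerivAt.comp_hasDerivAt 1 hL
    simp only [one_smul] at this; exact this
  have h2 : HasDerivAt (fun t : ℝ => t ^ m * f x) (m * f x) 1 := by
    have := (Real.hasDerivAt_rpow_const (x := (1:ℝ)) (p := m) (Or.inl one_ne_zero)).mul_const (f x)
    simpa using this
  have heq : (fun t : ℝ => f (t • x)) =ᶠ[nhds 1] (fun t : ℝ => t ^ m * f x) := by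
    filter_upwards [eventually_gt_nhds one_pos] with t ht
    exact hhom t ht
  have h2' : HasDerivAt (fun t : ℝ => f (t • x)) (m * f x) 1 := h2.congr_of_eventuallyEq heq
  have hxx : fderiv ℝ f x x = m * f x := h1.unique h2'
  have hx_sum : (∑ i, x i • (Pi.single i 1 : Fin n → ℝ)) = x := by
    ext j
    simp [Pi.single_apply]
  calc ∑ i, fderiv ℝ f x (Pi.single i 1) * x i
      = fderiv ℝ f x (∑ i, x i • (Pi.single i 1 : Fin n → ℝ)) := by
        rw [map_sum]; exact Finset.sum_congr rfl fun i _ => by simp [mul_comm]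
    _ = m * f x := by rw [hx_sum, hxx]

/-- Schur-type inequality: gradient of a symmetric convex function is similarly ordered. -/
private lemma schur_convex {n : ℕ} {f : (Fin n → ℝ) → ℝ} {Γ : Set (Fin n → ℝ)}
    (hΓ : Γ = {x : Fin n → ℝ | ∀ i, 0 < x i})
    (hsym : ∀ (σ : Equiv.Perm (Fin n)), ∀ x ∈ Γ, f (x ∘ σ) = f x)
    (hconv : ConvexOn ℝ Γ f) {x : Fin n → ℝ} (hx : x ∈ Γ)
    (hd : DifferentiableAt ℝ f x) (i j : Fin n) :
    0 ≤ (x i - x j) * (fderiv ℝ f x (Pi.single i 1) - fderiv ℝ f x (Pi.single j 1)) := by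
  rcases eq_or_ne i j with rfl | hij
  · simp
  set y : Fin n → ℝ := x ∘ (Equiv.swap i j) with hy
  have hyΓ : y ∈ Γ := by
    have hx' := hx
    rw [hΓ] at hx' ⊢
    intro k
    exact hx' _
  have hfy : f y = f x := hsym _ x hx
  have hyx : y - x = (x j - x i) • (Pi.single i 1 - Pi.single j (1:ℝ)) := by
    funext k
    rcases eq_or_ne k i with rfl | hki
    · simp [hy, Equiv.swap_apply_left, Pi.single_apply, hij.symm]
    rcases eq_or_ne k j with rfl | hkj
    · simp [hy, Equiv.swap_apply_right, Pi.single_apply, hij, hij.symm]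
    · simp [hy, Equiv.swap_apply_of_ne_of_ne hki hkj, Pi.single_apply, hki, hkj]
  have key := gradineq_convex hconv hx hyΓ hd
  rw [hfy, sub_self, hyx] at key
  simp only [map_smul, map_sub, smul_eq_mul] at key
  nlinarith [key]

theorem lemma23_first_ineq_convex_concave (n : ℕ) (m : ℝ) (hm : m ≠ 0)
    (f g : (Fin n → ℝ) → ℝ)
    (Γ : Set (Fin n → ℝ)) (hΓ : Γ = {x : Fin n → ℝ | ∀ i, 0 < x i})
    (hsymf : ∀ (σ : Equiv.Perm (Fin n)), ∀ x ∈ Γ, f (x ∘ σ) = f x)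
    (hsymg : ∀ (σ : Equiv.Perm (Fin n)), ∀ x ∈ Γ, g (x ∘ σ) = g x)
    (hdf : ∀ x ∈ Γ, DifferentiableAt ℝ f x)
    (hdg : ∀ x ∈ Γ, DifferentiableAt ℝ g x)
    (hhomf : ∀ t : ℝ, 0 < t → ∀ x ∈ Γ, f (t • x) = t ^ m * f x)
    (hhomg : ∀ t : ℝ, 0 < t → ∀ x ∈ Γ, g (t • x) = t ^ m * g x)
    (hellf : ∀ x ∈ Γ, ∀ i, 0 < fderiv ℝ f x (Pi.single i 1))
    (hellg : ∀ x ∈ Γ, ∀ i, 0 < fderiv ℝ g x (Pi.single i 1))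
    (hconvf : ConvexOn ℝ Γ f) (hconcg : ConcaveOn ℝ Γ g) :
    ∀ x ∈ Γ,
      0 ≤ m * (g x * ∑ i, fderiv ℝ f x (Pi.single i 1) * (x i) ^ 2
             - f x * ∑ i, fderiv ℝ g x (Pi.single i 1) * (x i) ^ 2) := by
  intro x hx
  set F : Fin n → ℝ := fun i => fderiv ℝ f x (Pi.single i 1) with hF
  set G : Fin n → ℝ := fun i => fderiv ℝ g x (Pi.single i 1) with hG
  have hxp : ∀ i, 0 < x i := by have h := hx; rw [hΓ] at h; exact h
  have hFp : ∀ i, 0 < F i := hellf x hx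
  have hGp : ∀ i, 0 < G i := hellg x hx
  have hEf : ∑ i, F i * x i = m * f x := euler_id (hdf x hx) (fun t ht => hhomf t ht x hx)
  have hEg : ∑ i, G i * x i = m * g x := euler_id (hdg x hx) (fun t ht => hhomg t ht x hx)
  have hSchurF : ∀ i j, 0 ≤ (x i - x j) * (F i - F j) := fun i j =>
    schur_convex hΓ hsymf hconvf hx (hdf x hx) i j
  have hSchurG : ∀ i j, (x i - x j) * (G i - G j) ≤ 0 := by
    intro i j
    have := schur_convex hΓ (fun σ z hz => by
        have := hsymg σ z hz; simp [this]) hconcg.neg hx (hdg x hx).neg i j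
    simp only [Pi.neg_def, fderiv_fun_neg, ContinuousLinearMap.neg_apply] at this
    nlinarith [this]
  -- key rewrite of the target
  have htarget : m * (g x * ∑ i, F i * (x i) ^ 2 - f x * ∑ i, G i * (x i) ^ 2)
      = (∑ i, G i * x i) * (∑ i, F i * (x i) ^ 2)
        - (∑ i, F i * x i) * (∑ i, G i * (x i) ^ 2) := by
    rw [hEf, hEg]; ring
  rw [htarget]
  set S : ℝ := ∑ i, ∑ j, (G i * x i * (F j * (x j) ^ 2) - F i * x i * (G j * (x j) ^ 2)) with hS
  have hSeq : (∑ i, G i * x i) * (∑ i, F i * (x i) ^ 2)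
      - (∑ i, F i * x i) * (∑ i, G i * (x i) ^ 2) = S := by
    rw [hS, Finset.sum_mul_sum, Finset.sum_mul_sum, ← Finset.sum_sub_distrib]
    exact Finset.sum_congr rfl fun i _ => by rw [← Finset.sum_sub_distrib]
  rw [hSeq]
  have hterm : ∀ i j, 0 ≤ (G i * x i * (F j * (x j) ^ 2) - F i * x i * (G j * (x j) ^ 2))
      + (G j * x j * (F i * (x i) ^ 2) - F j * x j * (G i * (x i) ^ 2)) := by
    intro i j
    have h1 : 0 ≤ x i * x j * G i * ((x i - x j) * (F i - F j)) :=
      mul_nonneg (mul_pos (mul_pos (hxp i) (hxp j)) (hGp i)).le (hSchurF i j)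
    have h2 : 0 ≤ x i * x j * F i * (-((x i - x j) * (G i - G j))) :=
      mul_nonneg (mul_pos (mul_pos (hxp i) (hxp j)) (hFp i)).le (by linarith [hSchurG i j])
    nlinarith [h1, h2]
  have h2S : 0 ≤ S + S := by
    nth_rewrite 2 [hS]
    rw [Finset.sum_comm (s := Finset.univ) (t := Finset.univ)]
    rw [hS, ← Finset.sum_add_distrib]
    refine Finset.sum_nonneg fun i _ => ?_
    rw [← Finset.sum_add_distrib]
    exact Finset.sum_nonneg fun j _ => hterm i j
  linarith
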